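/- Let c > 0 and let P be a c-packed polygonal curve of complexity at most k in ℝ^d. Let λ ≥ 0, Δ ≥ 0 and p ∈ ℝ^d. Then there exist at most ⌈2c⌉ points p₁*,…,p_{⌈2c⌉}* ∈ ℝ^d such that 𝓛_{λ,Δ}(P,p) is contained in the union of the closed balls of radius 5Δ centered at these points. -/

import Mathlib

open Set Metric Function

noncomputable section

/-- Euclidean space ℝ^d. -/
abbrev Euc (d : ℕ) := EuclideanSpace ℝ (Fin d)

/-- The polygonal curve (parametrized over `[0,1]`) obtained by concatenating the
segments between consecutive vertices `p 0, p 1, …, p n`. -/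
def curveMap {d n : ℕ} (p : Fin (n + 1) → Euc d) (t : ℝ) : Euc d :=
  if h : n = 0 then p 0
  else
    (1 - (t * n - (min ⌊t * (n : ℝ)⌋₊ (n - 1) : ℕ))) • p ⟨min ⌊t * (n : ℝ)⌋₊ (n - 1), by omega⟩
      + (t * n - (min ⌊t * (n : ℝ)⌋₊ (n - 1) : ℕ)) • p ⟨min ⌊t * (n : ℝ)⌋₊ (n - 1) + 1, by omega⟩

/-- A reparametrization: a continuous non-decreasing surjection of `[0,1]` onto itself. -/
def IsRepar (f : ℝ → ℝ) : Prop :=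
  ContinuousOn f (Icc 0 1) ∧ MonotoneOn f (Icc 0 1) ∧ f '' Icc 0 1 = Icc 0 1

/-- The (continuous) Fréchet distance between two curves `[0,1] → ℝ^d`. -/
def frechetDist {d : ℕ} (P Q : ℝ → Euc d) : ℝ :=
  sInf { r : ℝ | ∃ f g : ℝ → ℝ, IsRepar f ∧ IsRepar g ∧
    ∀ t ∈ Icc (0 : ℝ) 1, dist (P (f t)) (Q (g t)) ≤ r }

/-- The edge (segment curve) from `a` to `b`, parametrized over `[0,1]`. -/
def seg {d : ℕ} (a b : Euc d) (t : ℝ) : Euc d := (1 - t) • a + t • b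

/-- The subcurve `P[s,t]` of `P`, reparametrized over `[0,1]`. -/
def subcurve {d : ℕ} (P : ℝ → Euc d) (s t : ℝ) (u : ℝ) : Euc d := P (s + u * (t - s))

/-- All edge lengths of the polygonal curve with vertices `p` are at most `Λ`. -/
def EdgeLenLe {d n : ℕ} (p : Fin (n + 1) → Euc d) (Λ : ℝ) : Prop :=
  ∀ i : Fin n, dist (p i.castSucc) (p i.succ) ≤ Λ

/-- The vertices `p` define a `(μ,ε)`-curve: each edge length is a non-negative integer
multiple of `ε` and is at most `μ·ε`. -/
def IsMuEpsEdges {d n : ℕ} (p : Fin (n + 1) → Euc d) (μ : ℕ) (ε : ℝ) : Prop :=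
  ∀ i : Fin n, (∃ m : ℕ, dist (p i.castSucc) (p i.succ) = m * ε) ∧
    dist (p i.castSucc) (p i.succ) ≤ μ * ε

/-- The `Δ`-neighbourhood of a set `A ⊆ ℝ^d`. -/
def nbhd {d : ℕ} (A : Set (Euc d)) (Δ : ℝ) : Set (Euc d) :=
  { x | ∃ a ∈ A, dist x a ≤ Δ }

/-- The locus `L_{λ,Δ}(P,s)` of endpoints of edges of length `λ` that are within Fréchet
distance `Δ` of some subcurve of `P` starting at parameter `s`. -/
def locusStart {d n : ℕ} (P : Fin (n + 1) → Euc d) (lam Δ s : ℝ) : Set (Euc d) :=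
  { q | ∃ p : Euc d, ∃ t ∈ Icc s 1, dist p q = lam ∧
      frechetDist (subcurve (curveMap P) s t) (seg p q) ≤ Δ }

/-- The locus `𝓛_{λ,Δ}(P,p)` of endpoints of edges of length `λ` starting at `p` that are
within Fréchet distance `Δ` of some subcurve of `P`. -/
def locusPoint {d n : ℕ} (P : Fin (n + 1) → Euc d) (lam Δ : ℝ) (p : Euc d) : Set (Euc d) :=
  { q | dist p q = lam ∧ ∃ s t : ℝ, 0 ≤ s ∧ s ≤ t ∧ t ≤ 1 ∧
      frechetDist (subcurve (curveMap P) s t) (seg p q) ≤ Δ }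

/-- A curve `P : [0,1] → ℝ^d` is `c`-packed if, for every point `x` and radius `r > 0`, the
arc length of the portion of `P` inside the closed ball of radius `r` around `x` (the total
variation of `P` on the preimage of that ball) is at most `c·r`. -/
def IsCPacked {d : ℕ} (P : ℝ → Euc d) (c : ℝ) : Prop :=
  ∀ (x : Euc d) (r : ℝ), 0 < r →
    eVariationOn P (Icc 0 1 ∩ P ⁻¹' closedBall x r) ≤ ENNReal.ofReal (c * r)

/-- Lemma 3.14 of the paper. For a `c`-packed polygonal curve `P` of
complexity at most `k`, the set `𝓛_{λ,Δ}(P,p)` is contained in the union of at most `⌈2c⌉`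
closed balls of radius `5Δ`. -/
-- my aux
def FS {d : ℕ} (X Y : ℝ → Euc d) : Set ℝ :=
  { r : ℝ | ∃ f g : ℝ → ℝ, IsRepar f ∧ IsRepar g ∧
    ∀ t ∈ Icc (0 : ℝ) 1, dist (X (f t)) (Y (g t)) ≤ r }

lemma frechetDist_eq {d : ℕ} (X Y : ℝ → Euc d) : frechetDist X Y = sInf (FS X Y) := rfl

lemma isRepar_id : IsRepar (id : ℝ → ℝ) :=
  ⟨continuousOn_id, monotone_id.monotoneOn _, image_id _⟩

lemma IsRepar.mapsTo {f : ℝ → ℝ} (hf : IsRepar f) {t : ℝ} (ht : t ∈ Icc (0:ℝ) 1) :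
    f t ∈ Icc (0:ℝ) 1 := by
  rw [← hf.2.2]; exact mem_image_of_mem f ht

lemma IsRepar.zero {f : ℝ → ℝ} (hf : IsRepar f) : f 0 = 0 := by
  have h0 : f 0 ∈ Icc (0:ℝ) 1 := hf.mapsTo (by norm_num)
  obtain ⟨x, hx, hfx⟩ : ∃ x ∈ Icc (0:ℝ) 1, f x = 0 := by
    have : (0:ℝ) ∈ f '' Icc 0 1 := by rw [hf.2.2]; norm_num
    simpa using this
  have h1 := hf.2.1 (by norm_num : (0:ℝ) ∈ Icc (0:ℝ) 1) hx hx.1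
  have := h0.1
  linarith [hfx ▸ h1]

lemma IsRepar.one {f : ℝ → ℝ} (hf : IsRepar f) : f 1 = 1 := by
  have h0 : f 1 ∈ Icc (0:ℝ) 1 := hf.mapsTo (by norm_num)
  obtain ⟨x, hx, hfx⟩ : ∃ x ∈ Icc (0:ℝ) 1, f x = 1 := by
    have : (1:ℝ) ∈ f '' Icc 0 1 := by rw [hf.2.2]; norm_num
    simpa using this
  have h1 := hf.2.1 hx (by norm_num : (1:ℝ) ∈ Icc (0:ℝ) 1) hx.2
  have := h0.2
  linarith [hfx ▸ h1]

lemma dist_combo_le {d : ℕ} {a : ℝ} (h0 : 0 ≤ a) (h1 : a ≤ 1) (v w x : Euc d) :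
    dist ((1-a) • v + a • w) x ≤ max (dist v x) (dist w x) := by
  have e : (1-a) • v + a • w - x = (1-a) • (v - x) + a • (w - x) := by module
  rw [dist_eq_norm, e]
  calc ‖(1-a) • (v - x) + a • (w - x)‖ ≤ ‖(1-a) • (v - x)‖ + ‖a • (w - x)‖ := norm_add_le _ _
    _ = (1-a) * ‖v - x‖ + a * ‖w - x‖ := by
        rw [norm_smul, norm_smul, Real.norm_of_nonneg (by linarith), Real.norm_of_nonneg h0]
    _ ≤ (1-a) * max (dist v x) (dist w x) + a * max (dist v x) (dist w x) := by
        have hv : ‖v - x‖ ≤ max (dist v x) (dist w x) := by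
          rw [← dist_eq_norm]; exact le_max_left _ _
        have hw' : ‖w - x‖ ≤ max (dist v x) (dist w x) := by
          rw [← dist_eq_norm]; exact le_max_right _ _
        exact add_le_add (mul_le_mul_of_nonneg_left hv (by linarith))
          (mul_le_mul_of_nonneg_left hw' h0)
    _ = max (dist v x) (dist w x) := by ring

lemma curveMap_dist_le {d n : ℕ} (P : Fin (n+1) → Euc d) (x : Euc d) {u : ℝ}
    (hu : u ∈ Icc (0:ℝ) 1) :
    dist (curveMap P u) x ≤ Finset.univ.sup' Finset.univ_nonempty (fun i => dist (P i) x) := by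
  set M := Finset.univ.sup' Finset.univ_nonempty (fun i => dist (P i) x) with hM
  have key : ∀ i, dist (P i) x ≤ M := fun i => Finset.le_sup' (fun i => dist (P i) x) (Finset.mem_univ i)
  unfold curveMap
  split_ifs with h
  · exact key 0
  · set j := min ⌊u * (n : ℝ)⌋₊ (n - 1) with hj
    set a := u * (n:ℝ) - (j : ℕ) with ha
    have hn1 : 1 ≤ n := Nat.one_le_iff_ne_zero.mpr h
    have hun : 0 ≤ u * (n:ℝ) := mul_nonneg hu.1 (Nat.cast_nonneg n)
    have h0a : 0 ≤ a := by
      have h1 : ((j : ℕ) : ℝ) ≤ (⌊u * (n:ℝ)⌋₊ : ℝ) := by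
        exact_mod_cast min_le_left _ _
      have h2 : (⌊u * (n:ℝ)⌋₊ : ℝ) ≤ u * n := Nat.floor_le hun
      simp only [ha]; linarith
    have ha1 : a ≤ 1 := by
      rcases le_or_gt (⌊u * (n:ℝ)⌋₊) (n-1) with hle | hlt
      · have hjj : j = ⌊u * (n:ℝ)⌋₊ := min_eq_left hle
        have := Nat.lt_floor_add_one (u * (n:ℝ))
        simp only [ha, hjj]
        push_cast
        linarith
      · have hjj : j = n - 1 := min_eq_right hlt.le
        have h2 : u * (n:ℝ) ≤ n := by
          nlinarith [hu.2, Nat.cast_nonneg (α := ℝ) n]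
        have hcast : ((n - 1 : ℕ) : ℝ) = (n : ℝ) - 1 := by
          rw [Nat.cast_sub hn1]; norm_num
        simp only [ha, hjj, hcast]
        linarith
    exact le_trans (dist_combo_le h0a ha1 _ _ _) (max_le (key _) (key _))

lemma seg_zero {d : ℕ} (a b : Euc d) : seg a b 0 = a := by simp [seg]
lemma seg_one {d : ℕ} (a b : Euc d) : seg a b 1 = b := by simp [seg]

lemma dist_left_seg {d : ℕ} (a b : Euc d) {v : ℝ} (h0 : 0 ≤ v) :
    dist a (seg a b v) = v * dist a b := by
  have e : a - seg a b v = v • (a - b) := by simp only [seg]; module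
  rw [dist_eq_norm, dist_eq_norm, e, norm_smul, Real.norm_of_nonneg h0]

lemma dist_seg_right {d : ℕ} (a b : Euc d) {v : ℝ} (h1 : v ≤ 1) :
    dist (seg a b v) b = (1-v) * dist a b := by
  have e : seg a b v - b = (1-v) • (a - b) := by simp only [seg]; module
  rw [dist_eq_norm, dist_eq_norm, e, norm_smul, Real.norm_of_nonneg (by linarith)]

lemma FS_nonempty {d n : ℕ} (P : Fin (n+1) → Euc d) {s t : ℝ} (hs : s ∈ Icc (0:ℝ) 1)
    (ht : t ∈ Icc (0:ℝ) 1) (a b : Euc d) :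
    (FS (subcurve (curveMap P) s t) (seg a b)).Nonempty := by
  refine ⟨(Finset.univ.sup' Finset.univ_nonempty fun i => dist (P i) a) + dist a b,
    id, id, isRepar_id, isRepar_id, fun w hw => ?_⟩
  have hu : s + w * (t - s) ∈ Icc (0:ℝ) 1 := by
    constructor
    · nlinarith [mul_nonneg hw.1 ht.1, mul_nonneg (by linarith [hw.2] : (0:ℝ) ≤ 1 - w) hs.1]
    · nlinarith [mul_nonneg (by linarith [hw.2] : (0:ℝ) ≤ 1 - w) (by linarith [hs.2] : (0:ℝ) ≤ 1 - s),
        mul_nonneg hw.1 (by linarith [ht.2] : (0:ℝ) ≤ 1 - t)]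
  calc dist (subcurve (curveMap P) s t (id w)) (seg a b (id w))
      ≤ dist (curveMap P (s + w * (t - s))) a + dist a (seg a b w) := dist_triangle _ _ _
    _ ≤ (Finset.univ.sup' Finset.univ_nonempty fun i => dist (P i) a) + dist a b := by
        have h1 := curveMap_dist_le P a hu
        have h2 : dist a (seg a b w) = w * dist a b := dist_left_seg a b hw.1
        nlinarith [hw.2, dist_nonneg (x := a) (y := b), hw.1]

lemma frechet_endpoints {d n : ℕ} (P : Fin (n+1) → Euc d) {s t : ℝ} (hs : s ∈ Icc (0:ℝ) 1)
    (ht : t ∈ Icc (0:ℝ) 1) (a b : Euc d) {Δ : ℝ}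
    (hF : frechetDist (subcurve (curveMap P) s t) (seg a b) ≤ Δ) :
    dist (curveMap P s) a ≤ Δ ∧ dist (curveMap P t) b ≤ Δ := by
  rw [frechetDist_eq] at hF
  have hne := FS_nonempty P hs ht a b
  constructor
  · refine le_trans (le_trans (le_csInf hne ?_) (le_refl _)) hF
    rintro r ⟨f, g, hf, hg, hr⟩
    have h0 := hr 0 (by norm_num)
    rw [hf.zero, hg.zero] at h0
    simpa [subcurve, seg] using h0
  · refine le_trans (le_trans (le_csInf hne ?_) (le_refl _)) hF
    rintro r ⟨f, g, hf, hg, hr⟩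
    have h1 := hr 1 (by norm_num)
    rw [hf.one, hg.one] at h1
    have e : s + 1 * (t - s) = t := by ring
    simpa [subcurve, seg, e] using h1

lemma frechet_tube {d n : ℕ} (P : Fin (n+1) → Euc d) {s t : ℝ} (hs : s ∈ Icc (0:ℝ) 1)
    (ht : t ∈ Icc (0:ℝ) 1) (hst : s ≤ t) (a b : Euc d) {Δ : ℝ}
    (hF : frechetDist (subcurve (curveMap P) s t) (seg a b) ≤ Δ) {ε : ℝ} (hε : 0 < ε)
    {u : ℝ} (hu : u ∈ Icc s t) :
    ∃ v ∈ Icc (0:ℝ) 1, dist (curveMap P u) (seg a b v) ≤ Δ + ε := by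
  rw [frechetDist_eq] at hF
  obtain ⟨r, ⟨f, g, hf, hg, hr⟩, hrε⟩ :=
    exists_lt_of_csInf_lt (FS_nonempty P hs ht a b) (lt_of_le_of_lt hF (show Δ < Δ + ε by linarith))
  rcases eq_or_lt_of_le hst with rfl | hlt
  · have hu' : u = s := le_antisymm hu.2 hu.1
    subst hu'
    refine ⟨g 0, hg.mapsTo (by norm_num), ?_⟩
    have h0 := hr 0 (by norm_num)
    rw [hf.zero] at h0
    have e : u + (0:ℝ) * (u - u) = u := by ring
    simp only [subcurve, e] at h0
    linarith
  · set w0 := (u - s) / (t - s) with hw0def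
    have hts : 0 < t - s := by linarith
    have hw0 : w0 ∈ Icc (0:ℝ) 1 := by
      constructor
      · exact div_nonneg (by linarith [hu.1]) hts.le
      · rw [div_le_one hts]; linarith [hu.2]
    obtain ⟨w, hw, hfw⟩ : ∃ w ∈ Icc (0:ℝ) 1, f w = w0 := by
      have : w0 ∈ f '' Icc 0 1 := by rw [hf.2.2]; exact hw0
      simpa using this
    refine ⟨g w, hg.mapsTo hw, ?_⟩
    have hrw := hr w hw
    have e : s + f w * (t - s) = u := by
      rw [hfw, hw0def]; field_simp; ring
    simp only [subcurve] at hrw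
    rw [e] at hrw
    linarith

lemma chain_le {m : ℕ} {s t : ℕ → ℝ} (h1 : ∀ k < m, s k ≤ t k)
    (h2 : ∀ k, k + 1 < m → t k ≤ s (k+1)) :
    ∀ k l, k < l → l < m → t k ≤ s l := by
  intro k l hkl hlm
  induction l with
  | zero => omega
  | succ l ih =>
    rcases Nat.lt_succ_iff_lt_or_eq.mp hkl with h | h
    · calc t k ≤ s l := ih h (by omega)
        _ ≤ t l := h1 l (by omega)
        _ ≤ s (l+1) := h2 l hlm
    · subst h; exact h2 k hlm

lemma sum_edist_le_eVariationOn {d : ℕ} (f : ℝ → Euc d) :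
    ∀ (m : ℕ) (A : Set ℝ) (s t : ℕ → ℝ),
    (∀ k < m, s k ≤ t k) → (∀ k, k + 1 < m → t k ≤ s (k+1)) →
    (∀ k < m, s k ∈ A) → (∀ k < m, t k ∈ A) →
    ∑ k ∈ Finset.range m, edist (f (t k)) (f (s k)) ≤ eVariationOn f A := by
  intro m
  induction m with
  | zero => intro A s t _ _ _ _; simp
  | succ m ih =>
    intro A s t h1 h2 h3 h4
    rcases Nat.eq_zero_or_pos m with rfl | hm
    · simpa [edist_comm] using eVariationOn.edist_le f (h3 0 (by norm_num)) (h4 0 (by norm_num))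
    · have hchain : ∀ k < m, t k ≤ s m := by
        intro k hk
        exact chain_le (m := m + 1) h1 h2 k m hk (by omega)
      have hsub : ∑ k ∈ Finset.range m, edist (f (t k)) (f (s k))
          ≤ eVariationOn f (A ∩ Iic (s m)) := by
        apply ih (A ∩ Iic (s m)) s t (fun k hk => h1 k (by omega)) (fun k hk => h2 k (by omega))
        · intro k hk
          exact ⟨h3 k (by omega), le_trans (h1 k (by omega)) (hchain k hk)⟩
        · intro k hk
          exact ⟨h4 k (by omega), hchain k hk⟩
      have hmem1 : s m ∈ A ∩ Ici (s m) := ⟨h3 m (by omega), mem_Ici.mpr le_rfl⟩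
      have hmem2 : t m ∈ A ∩ Ici (s m) := ⟨h4 m (by omega), mem_Ici.mpr (h1 m (by omega))⟩
      have hlast : edist (f (t m)) (f (s m)) ≤ eVariationOn f (A ∩ Ici (s m)) :=
        eVariationOn.edist_le f hmem2 hmem1
      rw [Finset.sum_range_succ]
      calc ∑ k ∈ Finset.range m, edist (f (t k)) (f (s k)) + edist (f (t m)) (f (s m))
          ≤ eVariationOn f (A ∩ Iic (s m)) + eVariationOn f (A ∩ Ici (s m)) :=
            add_le_add hsub hlast
        _ ≤ eVariationOn f ((A ∩ Iic (s m)) ∪ (A ∩ Ici (s m))) := by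
            apply eVariationOn.add_le_union
            rintro x ⟨_, hx⟩ y ⟨_, hy⟩
            exact le_trans hx hy
        _ = eVariationOn f A := by
            rw [← inter_union_distrib_left, Iic_union_Ici, inter_univ]

lemma cross_lemma {d n : ℕ} (P : Fin (n+1) → Euc d) {lam Δ : ℝ} (hΔ : 0 ≤ Δ) (p : Euc d)
    {q1 q2 : Euc d} {s1 t1 s2 t2 : ℝ}
    (hd1 : dist p q1 = lam) (hd2 : dist p q2 = lam)
    (hs1 : 0 ≤ s1) (hst1 : s1 ≤ t1) (ht1 : t1 ≤ 1)
    (hs2 : 0 ≤ s2) (hst2 : s2 ≤ t2) (ht2 : t2 ≤ 1)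
    (hF1 : frechetDist (subcurve (curveMap P) s1 t1) (seg p q1) ≤ Δ)
    (hF2 : frechetDist (subcurve (curveMap P) s2 t2) (seg p q2) ≤ Δ)
    (hmem : t2 ∈ Icc s1 t1) :
    dist q1 q2 ≤ 4 * Δ := by
  have hIs1 : s1 ∈ Icc (0:ℝ) 1 := ⟨hs1, le_trans hst1 ht1⟩
  have hIt1 : t1 ∈ Icc (0:ℝ) 1 := ⟨le_trans hs1 hst1, ht1⟩
  have hIs2 : s2 ∈ Icc (0:ℝ) 1 := ⟨hs2, le_trans hst2 ht2⟩
  have hIt2 : t2 ∈ Icc (0:ℝ) 1 := ⟨le_trans hs2 hst2, ht2⟩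
  have hend2 : dist (curveMap P t2) q2 ≤ Δ := (frechet_endpoints P hIs2 hIt2 p q2 hF2).2
  refine le_of_forall_pos_le_add ?_
  intro ε hε
  obtain ⟨v, hv, hdv⟩ := frechet_tube P hIs1 hIt1 hst1 p q1 hF1 (half_pos hε) hmem
  -- dist q2 (seg p q1 v) ≤ 2Δ + ε/2
  have h1 : dist q2 (seg p q1 v) ≤ 2*Δ + ε/2 := by
    calc dist q2 (seg p q1 v) ≤ dist q2 (curveMap P t2) + dist (curveMap P t2) (seg p q1 v) :=
          dist_triangle _ _ _
      _ ≤ 2*Δ + ε/2 := by rw [dist_comm q2] ; linarith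
  have hp1 : dist p (seg p q1 v) = v * lam := by rw [dist_left_seg p q1 hv.1, hd1]
  have hq1seg : dist (seg p q1 v) q1 = (1-v) * lam := by rw [dist_seg_right p q1 hv.2, hd1]
  have h2 : lam - v * lam ≤ 2*Δ + ε/2 := by
    have : lam ≤ v * lam + (2*Δ + ε/2) := by
      calc lam = dist p q2 := hd2.symm
        _ ≤ dist p (seg p q1 v) + dist (seg p q1 v) q2 := dist_triangle _ _ _
        _ ≤ v * lam + (2*Δ + ε/2) := by rw [hp1, dist_comm]; linarith
    linarith
  calc dist q1 q2 ≤ dist q1 (seg p q1 v) + dist (seg p q1 v) q2 := dist_triangle _ _ _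
    _ ≤ 4*Δ + ε := by
        rw [dist_comm q1, dist_comm _ q2]
        have : (1-v) * lam = lam - v * lam := by ring
        linarith [hq1seg, h1, this ▸ hq1seg]

theorem locusPoint_subset_balls_cpacked (d k n : ℕ) (hn : n + 1 ≤ k) (c : ℝ) (hc : 0 < c)
    (P : Fin (n + 1) → Euc d) (hP : IsCPacked (curveMap P) c)
    (lam Δ : ℝ) (hlam : 0 ≤ lam) (hΔ : 0 ≤ Δ) (p : Euc d) :
    ∃ q : Fin ⌈2 * c⌉₊ → Euc d, locusPoint P lam Δ p ⊆ ⋃ i, closedBall (q i) (5 * Δ) := by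
  classical
  set N := ⌈2 * c⌉₊ with hN
  have hN1 : 1 ≤ N := Nat.one_le_iff_ne_zero.mpr (by
    simp only [hN, ne_eq, Nat.ceil_eq_zero, not_le]; linarith)
  set L := locusPoint P lam Δ p with hL
  rcases le_or_gt lam (5 * Δ) with hcase | hcase
  · -- easy case: one ball around p
    refine ⟨fun _ => p, fun x hx => ?_⟩
    have hdx : dist p x = lam := hx.1
    exact mem_iUnion.mpr ⟨⟨0, by omega⟩, by
      simp only [mem_closedBall]
      rw [dist_comm]; linarith [hdx]⟩
  · -- main case
    -- counting: no (N+1) points of L pairwise > 5Δ apart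
    have hcount : ¬ ∃ f : Fin (N+1) → Euc d,
        (∀ i, f i ∈ L) ∧ (∀ i j, i ≠ j → 5 * Δ < dist (f i) (f j)) := by
      rintro ⟨q, hqL, hsep⟩
      have hdq : ∀ i, dist p (q i) = lam := fun i => (hqL i).1
      choose s t hs hst ht hF using fun i => (hqL i).2
      have hnotin : ∀ i j, i ≠ j → t j ∉ Icc (s i) (t i) := by
        intro i j hij hmem
        have hcr := cross_lemma P hΔ p (hdq i) (hdq j) (hs i) (hst i) (ht i)
          (hs j) (hst j) (ht j) (hF i) (hF j) hmem
        have := hsep i j hij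
        linarith
      have hdich : ∀ i j : Fin (N+1), i ≠ j → t i < s j ∨ t j < s i := by
        intro i j hij
        rcases le_total (t i) (t j) with h | h
        · left
          by_contra h'
          push_neg at h'
          exact hnotin j i (Ne.symm hij) ⟨h', h⟩
        · right
          by_contra h'
          push_neg at h'
          exact hnotin i j hij ⟨h', h⟩
      -- sort by t
      set σ := Tuple.sort t with hσ
      have hmono : Monotone (t ∘ σ) := Tuple.monotone_sort t
      have horder : ∀ a b : Fin (N+1), a < b → t (σ a) < s (σ b) := by
        intro a b hab
        have hne : σ a ≠ σ b := fun h => (ne_of_lt hab) (σ.injective h)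
        rcases hdich (σ a) (σ b) hne with h | h
        · exact h
        · exfalso
          have h1 := hmono (le_of_lt hab)
          have h2 := hst (σ a)
          simp only [comp_apply] at h1
          linarith
      -- build ℕ-indexed sequences
      set S : ℕ → ℝ := fun a => if h : a < N+1 then s (σ ⟨a, h⟩) else 1 with hS
      set T : ℕ → ℝ := fun a => if h : a < N+1 then t (σ ⟨a, h⟩) else 1 with hT
      set A : Set ℝ := Icc (0:ℝ) 1 ∩ (curveMap P) ⁻¹' closedBall p (lam + Δ) with hA
      have hIs : ∀ i, s i ∈ Icc (0:ℝ) 1 := fun i => ⟨hs i, le_trans (hst i) (ht i)⟩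
      have hIt : ∀ i, t i ∈ Icc (0:ℝ) 1 := fun i => ⟨le_trans (hs i) (hst i), ht i⟩
      have hend : ∀ i, dist (curveMap P (s i)) p ≤ Δ ∧ dist (curveMap P (t i)) (q i) ≤ Δ :=
        fun i => frechet_endpoints P (hIs i) (hIt i) p (q i) (hF i)
      have hsum : ∑ a ∈ Finset.range (N+1), edist (curveMap P (T a)) (curveMap P (S a))
          ≤ eVariationOn (curveMap P) A := by
        apply sum_edist_le_eVariationOn (curveMap P) (N+1) A S T
        · intro a ha
          simp only [hS, hT, dif_pos ha]
          exact hst _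
        · intro a ha
          have ha' : a < N+1 := by omega
          simp only [hS, hT, dif_pos ha, dif_pos ha']
          exact le_of_lt (horder ⟨a, ha'⟩ ⟨a+1, ha⟩ (by simp [Fin.lt_def]))
        · intro a ha
          simp only [hS, dif_pos ha, hA]
          refine ⟨hIs _, ?_⟩
          simp only [mem_preimage, mem_closedBall]
          linarith [(hend (σ ⟨a, ha⟩)).1]
        · intro a ha
          simp only [hT, dif_pos ha, hA]
          refine ⟨hIt _, ?_⟩
          simp only [mem_preimage, mem_closedBall]
          have h1 := (hend (σ ⟨a, ha⟩)).2
          have h2 := hdq (σ ⟨a, ha⟩)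
          calc dist (curveMap P (t (σ ⟨a, ha⟩))) p
              ≤ dist (curveMap P (t (σ ⟨a, ha⟩))) (q (σ ⟨a, ha⟩)) + dist (q (σ ⟨a, ha⟩)) p :=
                dist_triangle _ _ _
            _ ≤ lam + Δ := by rw [dist_comm (q _) p]; linarith
      -- each term is at least lam - 2Δ
      have hterm : ∀ a ∈ Finset.range (N+1),
          ENNReal.ofReal (lam - 2*Δ) ≤ edist (curveMap P (T a)) (curveMap P (S a)) := by
        intro a ha
        rw [Finset.mem_range] at ha
        simp only [hS, hT, dif_pos ha]
        rw [edist_dist]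
        apply ENNReal.ofReal_le_ofReal
        set i := σ ⟨a, ha⟩
        have h1 := (hend i).1
        have h2 := (hend i).2
        have h3 := hdq i
        have : lam ≤ dist p (curveMap P (s i)) + dist (curveMap P (s i)) (curveMap P (t i))
            + dist (curveMap P (t i)) (q i) := by
          calc lam = dist p (q i) := h3.symm
            _ ≤ dist p (curveMap P (s i)) + dist (curveMap P (s i)) (q i) := dist_triangle _ _ _
            _ ≤ _ := by linarith [dist_triangle (curveMap P (s i)) (curveMap P (t i)) (q i)]
        rw [dist_comm p] at this
        rw [dist_comm (curveMap P (t i)) (curveMap P (s i))]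
        linarith
      have hlow : ENNReal.ofReal ((N+1 : ℝ) * (lam - 2*Δ))
          ≤ ∑ a ∈ Finset.range (N+1), edist (curveMap P (T a)) (curveMap P (S a)) := by
        calc ENNReal.ofReal ((N+1 : ℝ) * (lam - 2*Δ))
            = ∑ _a ∈ Finset.range (N+1), ENNReal.ofReal (lam - 2*Δ) := by
              rw [Finset.sum_const, Finset.card_range, nsmul_eq_mul]
              rw [← ENNReal.ofReal_natCast (N+1), ← ENNReal.ofReal_mul (by positivity)]
              norm_num
          _ ≤ _ := Finset.sum_le_sum hterm
      have hup := hP p (lam + Δ) (by linarith)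
      have hfinal : ((N:ℝ)+1) * (lam - 2*Δ) ≤ c * (lam + Δ) := by
        have := le_trans hlow (le_trans hsum hup)
        rw [ENNReal.ofReal_le_ofReal_iff (mul_nonneg hc.le (by linarith))] at this
        exact this
      have h2c : 2 * c ≤ (N : ℝ) := Nat.le_ceil (2*c)
      nlinarith [hfinal, h2c, hcase, hΔ, hc]
    -- greedy extraction of a maximal separated family
    set Sep : ℕ → Prop := fun j => ∃ f : Fin j → Euc d,
        (∀ i, f i ∈ L) ∧ (∀ i i', i ≠ i' → 5 * Δ < dist (f i) (f i')) with hSepDef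
    have hex : ∃ j, ¬ Sep j := ⟨N+1, hcount⟩
    set j₀ := Nat.find hex with hj₀def
    have hj₀spec : ¬ Sep j₀ := Nat.find_spec hex
    have hj₀le : j₀ ≤ N+1 := Nat.find_min' hex hcount
    have hj₀pos : 0 < j₀ := by
      rcases Nat.eq_zero_or_pos j₀ with h | h
      · exfalso; apply hj₀spec; rw [h]
        exact ⟨Fin.elim0, fun i => i.elim0, fun i => i.elim0⟩
      · exact h
    have hSep : Sep (j₀ - 1) := by
      by_contra h
      exact absurd (Nat.find_min hex (by omega : j₀ - 1 < j₀)) (by simpa using h)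
    obtain ⟨f, hfL, hfsep⟩ := hSep
    have hcover : ∀ x ∈ L, ∃ i : Fin (j₀ - 1), dist x (f i) ≤ 5 * Δ := by
      intro x hx
      by_contra h
      push_neg at h
      apply hj₀spec
      refine ⟨fun i => if hi : (i : ℕ) < j₀ - 1 then f ⟨i, hi⟩ else x, fun i => ?_, ?_⟩
      · by_cases hi : (i : ℕ) < j₀ - 1
        · simp only [dif_pos hi]; exact hfL _
        · simp only [dif_neg hi]; exact hx
      · intro i i' hii
        by_cases hi : (i : ℕ) < j₀ - 1 <;> by_cases hi' : (i' : ℕ) < j₀ - 1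
        · simp only [dif_pos hi, dif_pos hi']
          refine hfsep _ _ (fun hcon => hii ?_)
          have : (i : ℕ) = (i' : ℕ) := by
            simpa [Fin.ext_iff] using hcon
          exact Fin.ext this
        · simp only [dif_pos hi, dif_neg hi']
          rw [dist_comm]; exact h ⟨i, hi⟩
        · simp only [dif_neg hi, dif_pos hi']
          exact h ⟨i', hi'⟩
        · exfalso
          apply hii
          have h1 : (i : ℕ) = j₀ - 1 := by omega
          have h2 : (i' : ℕ) = j₀ - 1 := by omega
          exact Fin.ext (h1.trans h2.symm)
    have hj₀N : j₀ - 1 ≤ N := by omega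
    refine ⟨fun i : Fin N => if hi : (i : ℕ) < j₀ - 1 then f ⟨i, hi⟩ else p, fun x hx => ?_⟩
    obtain ⟨i, hi⟩ := hcover x hx
    have hiN : (i : ℕ) < N := lt_of_lt_of_le i.2 hj₀N
    refine mem_iUnion.mpr ⟨⟨i, hiN⟩, ?_⟩
    simp only [mem_closedBall]
    have : (⟨(i : ℕ), hiN⟩ : Fin N).1 < j₀ - 1 := i.2
    rw [dif_pos this]
    simpa using hi
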